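/- Let f be a monotone predicate on finite subsets of {1,…,m} and let A be a finite set with f(A). Define B as the result of iterating over the elements a of A (in any fixed order), starting from B := A, and replacing B by B ∖ {a} whenever f(B ∖ {a}) holds (leaving B unchanged otherwise). Then B ⊆ A, f(B) holds, and B is subset-inclusion-minimal among the sets satisfying f. (This establishes correctness of the deletion-based algorithms for extracting one AXp and one CXp from a seed.) -/

import Mathlib

private lemma deletion_aux {m : ℕ} (f : Finset (Fin m) → Prop)
    [DecidablePred f] (hmono : ∀ S T : Finset (Fin m), S ⊆ T → f S → f T) :
    ∀ (l : List (Fin m)) (B : Finset (Fin m)), f B →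
      (∀ a ∈ B, a ∉ l → ¬ f (B.erase a)) →
      (l.foldl (fun B a => if f (B.erase a) then B.erase a else B) B) ⊆ B ∧
      f (l.foldl (fun B a => if f (B.erase a) then B.erase a else B) B) ∧
      ∀ a ∈ l.foldl (fun B a => if f (B.erase a) then B.erase a else B) B,
        ¬ f ((l.foldl (fun B a => if f (B.erase a) then B.erase a else B) B).erase a) := by
  intro l
  induction l with
  | nil =>
    intro B hB h
    exact ⟨Finset.Subset.refl _, hB, fun a ha => h a ha List.not_mem_nil⟩
  | cons b t ih =>
    intro B hB h
    simp only [List.foldl_cons]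
    by_cases hb : f (B.erase b)
    · rw [if_pos hb]
      have h' : ∀ a ∈ B.erase b, a ∉ t → ¬ f ((B.erase b).erase a) := by
        intro a ha hat hfa
        have hab : a ≠ b := Finset.ne_of_mem_erase ha
        have haB : a ∈ B := Finset.mem_of_mem_erase ha
        have : a ∉ b :: t := by simp [hab, hat]
        exact h a haB this (hmono _ _ (Finset.erase_subset_erase a (Finset.erase_subset b B)) hfa)
      obtain ⟨h1, h2, h3⟩ := ih (B.erase b) hb h'
      exact ⟨h1.trans (Finset.erase_subset b B), h2, h3⟩
    · rw [if_neg hb]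
      have h' : ∀ a ∈ B, a ∉ t → ¬ f (B.erase a) := by
        intro a ha hat
        by_cases hab : a = b
        · subst hab; exact hb
        · exact h a ha (by simp [hab, hat])
      exact ih B hB h'


/-- Correctness of the deletion-based algorithm for extracting one minimal set
satisfying a monotone predicate `f` from a seed `A` with `f A`: iterating over
the elements of `A` (in any fixed order, given by a duplicate-free list `l`
enumerating `A`), and removing an element whenever `f` still holds on the
result, yields a subset `B ⊆ A` with `f B` that is subset-inclusion-minimal
among the sets satisfying `f`. -/
theorem deletion_based_extraction_correct {m : ℕ} (f : Finset (Fin m) → Prop)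
    [DecidablePred f] (hmono : ∀ S T : Finset (Fin m), S ⊆ T → f S → f T)
    (A : Finset (Fin m)) (hA : f A)
    (l : List (Fin m)) (hnd : l.Nodup) (hmem : ∀ a : Fin m, a ∈ l ↔ a ∈ A) :
    let B := l.foldl (fun B a => if f (B.erase a) then B.erase a else B) A
    B ⊆ A ∧ f B ∧ ∀ C : Finset (Fin m), C ⊂ B → ¬ f C := by
  intro B
  obtain ⟨h1, h2, h3⟩ := deletion_aux f hmono l A hA
    (fun a ha hal => absurd ((hmem a).mpr ha) hal)
  refine ⟨h1, h2, fun C hC hfC => ?_⟩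
  obtain ⟨a, haB, haC⟩ := Finset.exists_of_ssubset hC
  exact h3 a haB (hmono C _ (fun x hx => Finset.mem_erase.mpr
    ⟨fun he => haC (he ▸ hx), hC.1 hx⟩) hfC)
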